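/- As formal power series over ℚ in t, ∑_{n=0}^∞ B^{(μ)}_{n,≥m} t^n/n! · (E_{m−1}(−t) − e^{−t}) = Li_μ(E_{m−1}(−t) − e^{−t}), where B^{(μ)}_{n,≥m} = ∑_{k=0}^{n} (−1)^{n−k} k!/(k+1)^μ · S≥m(n, k), E_{m−1}(x) = ∑_{j=0}^{m−1} x^j/j!, e^{−t} is the formal exponential series in −t, and Li_μ(z) = ∑_{j≥1} z^j/j^μ composed formally. -/

import Mathlib

/-- Restricted Stirling number of the second kind: partitions of an `n`-set
into `k` blocks, each of size at most `m`. -/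
noncomputable def restStirling (m n k : ℕ) : ℕ :=
  Nat.card {P : Finpartition (Finset.univ : Finset (Fin n)) //
    P.parts.card = k ∧ ∀ b ∈ P.parts, b.card ≤ m}

/-- Associated Stirling number of the second kind: partitions of an `n`-set
into `k` blocks, each of size at least `m`. -/
noncomputable def assocStirling (m n k : ℕ) : ℕ :=
  Nat.card {P : Finpartition (Finset.univ : Finset (Fin n)) //
    P.parts.card = k ∧ ∀ b ∈ P.parts, m ≤ b.card}

/-- Ordinary Stirling number of the second kind. -/
noncomputable def ordStirling (n k : ℕ) : ℕ :=
  Nat.card {P : Finpartition (Finset.univ : Finset (Fin n)) // P.parts.card = k}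

/-- `E_m(x) = ∑_{j=0}^m x^j/j!`, the m-th partial sum of the exponential series. -/
noncomputable def Em (m : ℕ) : PowerSeries ℚ :=
  PowerSeries.mk fun j => if j ≤ m then 1 / j.factorial else 0

/-- Formal composition `Li_μ(f) = ∑_{j≥1} f^j / j^μ`, well defined coefficientwise
when `f` has zero constant term (then `coeff n (f^j) = 0` for `j > n`). -/
noncomputable def Li (μ : ℕ) (f : PowerSeries ℚ) : PowerSeries ℚ :=
  PowerSeries.mk fun n => ∑ j ∈ Finset.Icc 1 n, PowerSeries.coeff n (f ^ j) / (j : ℚ) ^ μ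

/-- Associated poly-Bernoulli numbers. -/
noncomputable def assocPolyBernoulli (μ m n : ℕ) : ℚ :=
  ∑ k ∈ Finset.range (n + 1),
    (-1 : ℚ) ^ (n - k) * k.factorial / (k + 1) ^ μ * assocStirling m n k


section AuxAll
open Finset PowerSeries


/-- fiber count helper -/
lemma ncard_fiber {α : Type} [Fintype α] {k : ℕ} (φ : α → Fin k) (i : Fin k) :
    Nat.card {x // φ x = i} = #(univ.filter fun x => φ x = i) := by
  rw [Nat.card_eq_fintype_card]; exact Fintype.card_subtype _

noncomputable def cnt (m k : ℕ) (α : Type) [Fintype α] : ℕ :=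
  Nat.card {φ : α → Fin k // ∀ i, m ≤ Nat.card {x // φ x = i}}

lemma cnt_congr (m k : ℕ) {α β : Type} [Fintype α] [Fintype β] (e : α ≃ β) :
    cnt m k α = cnt m k β := by
  apply Nat.card_congr
  refine Equiv.subtypeEquiv (Equiv.arrowCongr e (Equiv.refl _)) fun φ => ?_
  refine forall_congr' fun i => ?_
  have : Nat.card {y : β // (Equiv.arrowCongr e (Equiv.refl (Fin k)) φ) y = i}
      = Nat.card {x : α // φ x = i} := by
    apply Nat.card_congr
    refine (Equiv.subtypeEquiv e fun a => ?_).symm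
    simp [Equiv.arrowCongr]
  rw [this]

lemma cnt_zero (m : ℕ) (α : Type) [Fintype α] :
    cnt m 0 α = if Fintype.card α = 0 then 1 else 0 := by
  unfold cnt
  split_ifs with h
  · have : IsEmpty α := Fintype.card_eq_zero_iff.mp h
    have : Unique {φ : α → Fin 0 // ∀ i, m ≤ Nat.card {x // φ x = i}} :=
      { default := ⟨fun x => isEmptyElim x, fun i => i.elim0⟩
        uniq := fun ⟨φ, _⟩ => Subtype.ext (funext fun x => isEmptyElim x) }
    exact Nat.card_unique
  · have : Nonempty α := Fintype.card_pos_iff.mp (Nat.pos_of_ne_zero h)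
    obtain ⟨a⟩ := this
    have : IsEmpty {φ : α → Fin 0 // ∀ i, m ≤ Nat.card {x // φ x = i}} :=
      ⟨fun ⟨φ, _⟩ => (φ a).elim0⟩
    exact Nat.card_of_isEmpty

lemma nat_card_sigma {ι : Type} [Fintype ι] (β : ι → Type) [∀ i, Finite (β i)] :
    Nat.card (Σ i, β i) = ∑ i, Nat.card (β i) := by
  letI : ∀ i, Fintype (β i) := fun i => Fintype.ofFinite _
  simp [Nat.card_eq_fintype_card]

lemma Fin.castSucc_ne_last' {k : ℕ} (i : Fin k) : i.castSucc ≠ Fin.last k :=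
  (Fin.castSucc_lt_last i).ne

section cntsucc

variable {α : Type} [Fintype α] [DecidableEq α] {m k : ℕ}

private abbrev SigT (m k : ℕ) (α : Type) [Fintype α] [DecidableEq α] :=
  Σ S : Finset α, {ψ : {x // x ∉ S} → Fin k //
    m ≤ S.card ∧ ∀ i, m ≤ Nat.card {x // ψ x = i}}

private abbrev GoodT (m k : ℕ) (α : Type) [Fintype α] :=
  {φ : α → Fin k // ∀ i, m ≤ Nat.card {x // φ x = i}}

omit [DecidableEq α] in
private lemma not_mem_filter_last {φ : α → Fin (k+1)}
    {x : α} (hx : x ∉ univ.filter (fun y => φ y = Fin.last k)) : φ x ≠ Fin.last k := by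
  simpa using hx

private def toSig (p : GoodT m (k+1) α) : SigT m k α :=
  ⟨univ.filter (fun y => p.1 y = Fin.last k),
    fun x => (p.1 x.1).castPred (not_mem_filter_last x.2), by
      constructor
      · have := p.2 (Fin.last k)
        rwa [ncard_fiber] at this
      · intro i
        have e : {x : {x // x ∉ univ.filter (fun y => p.1 y = Fin.last k)} //
            (p.1 x.1).castPred (not_mem_filter_last x.2) = i}
            ≃ {x : α // p.1 x = i.castSucc} :=
          { toFun := fun x => ⟨x.1.1,
              (Fin.castPred_eq_iff_eq_castSucc _ _ _).mp x.2⟩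
            invFun := fun x => ⟨⟨x.1, by
                simp only [mem_filter, mem_univ, true_and, x.2]
                exact Fin.castSucc_ne_last' i⟩,
              (Fin.castPred_eq_iff_eq_castSucc _ _ _).mpr x.2⟩
            left_inv := fun x => rfl
            right_inv := fun x => rfl }
        rw [Nat.card_congr e]
        exact p.2 i.castSucc⟩

private def ofSig (p : SigT m k α) : GoodT m (k+1) α :=
  ⟨fun x => if h : x ∈ p.1 then Fin.last k else (p.2.1 ⟨x, h⟩).castSucc, by
    intro i
    induction i using Fin.lastCases with
    | last =>
      have e : {x : α // (if h : x ∈ p.1 then Fin.last k else (p.2.1 ⟨x, h⟩).castSucc)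
          = Fin.last k} ≃ {x : α // x ∈ p.1} := by
        refine Equiv.subtypeEquivRight fun x => ?_
        split_ifs with h
        · simp [h]
        · simp [h, Fin.castSucc_ne_last' (p.2.1 ⟨x, h⟩)]
      rw [Nat.card_congr e, Nat.card_eq_fintype_card, Fintype.card_coe]
      exact p.2.2.1
    | cast i =>
      have e : {x : α // (if h : x ∈ p.1 then Fin.last k else (p.2.1 ⟨x, h⟩).castSucc)
          = i.castSucc} ≃ {x : {x // x ∉ p.1} // p.2.1 x = i} :=
        { toFun := fun x => by
            have h1 : x.1 ∉ p.1 := by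
              intro hmem
              have := x.2
              rw [dif_pos hmem] at this
              exact Fin.castSucc_ne_last' i this.symm
            refine ⟨⟨x.1, h1⟩, ?_⟩
            have := x.2
            rw [dif_neg h1] at this
            exact Fin.castSucc_injective _ this
          invFun := fun x => ⟨x.1.1, by rw [dif_neg x.1.2, x.2]⟩
          left_inv := fun x => rfl
          right_inv := fun x => rfl }
      rw [Nat.card_congr e]
      exact p.2.2.2 i⟩

private lemma ofSig_toSig (p : GoodT m (k+1) α) :
    (ofSig (toSig p)).1 = p.1 := by
  funext x
  show (if h : x ∈ univ.filter (fun y => p.1 y = Fin.last k) then Fin.last k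
    else ((p.1 x).castPred (not_mem_filter_last h)).castSucc) = p.1 x
  split_ifs with h
  · exact ((mem_filter.mp h).2).symm
  · exact Fin.castSucc_castPred _ _

private lemma toSig_injective : Function.Injective (toSig : GoodT m (k+1) α → SigT m k α) := by
  intro a b hab
  have := congrArg ofSig hab
  exact Subtype.ext ((ofSig_toSig a).symm.trans ((congrArg Subtype.val this).trans (ofSig_toSig b)))

private lemma ofSig_injective : Function.Injective (ofSig : SigT m k α → GoodT m (k+1) α) := by
  rintro ⟨S, ψ, h⟩ ⟨S', ψ', h'⟩ heq
  have hfun : ∀ x : α, (if h : x ∈ S then Fin.last k else (ψ ⟨x, h⟩).castSucc)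
      = (if h : x ∈ S' then Fin.last k else (ψ' ⟨x, h⟩).castSucc) :=
    fun x => congrFun (congrArg Subtype.val heq) x
  have hSS : S = S' := by
    ext x
    constructor
    · intro hx
      by_contra hx'
      have := hfun x
      rw [dif_pos hx, dif_neg hx'] at this
      exact Fin.castSucc_ne_last' _ this.symm
    · intro hx
      by_contra hx'
      have := hfun x
      rw [dif_neg hx', dif_pos hx] at this
      exact Fin.castSucc_ne_last' _ this
  subst hSS
  have hpsi : ψ = ψ' := by
    funext x
    have := hfun x.1
    rw [dif_neg x.2, dif_neg x.2] at this
    exact Fin.castSucc_injective _ this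
  subst hpsi
  rfl

lemma cnt_succ (m k : ℕ) (α : Type) [Fintype α] [DecidableEq α] :
    cnt m (k+1) α = ∑ b ∈ range (Fintype.card α + 1),
      (Fintype.card α).choose b * (if m ≤ b then cnt m k (Fin (Fintype.card α - b)) else 0) := by
  have h1 : cnt m (k+1) α = Nat.card (SigT m k α) :=
    le_antisymm (Nat.card_le_card_of_injective _ toSig_injective)
      (Nat.card_le_card_of_injective _ ofSig_injective)
  rw [h1, SigT, nat_card_sigma]
  have h2 : ∀ S : Finset α, Nat.card {ψ : {x // x ∉ S} → Fin k //
      m ≤ S.card ∧ ∀ i, m ≤ Nat.card {x // ψ x = i}}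
      = if m ≤ S.card then cnt m k (Fin (Fintype.card α - S.card)) else 0 := by
    intro S
    split_ifs with h
    · have e : {ψ : {x // x ∉ S} → Fin k // m ≤ S.card ∧ ∀ i, m ≤ Nat.card {x // ψ x = i}}
          ≃ {ψ : {x // x ∉ S} → Fin k // ∀ i, m ≤ Nat.card {x // ψ x = i}} :=
        Equiv.subtypeEquivRight fun ψ => and_iff_right h
      rw [Nat.card_congr e]
      show cnt m k {x // x ∉ S} = _
      refine cnt_congr m k (Fintype.equivFinOfCardEq ?_)
      rw [Fintype.card_subtype_compl, Fintype.card_coe]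
    · have : IsEmpty {ψ : {x // x ∉ S} → Fin k //
          m ≤ S.card ∧ ∀ i, m ≤ Nat.card {x // ψ x = i}} := ⟨fun ψ => h ψ.2.1⟩
      exact Nat.card_of_isEmpty
  simp_rw [h2]
  rw [← Finset.powerset_univ, Finset.sum_powerset_apply_card
    (fun b => if m ≤ b then cnt m k (Fin (Fintype.card α - b)) else 0)]
  simp [card_univ, mul_comm]

end cntsucc

noncomputable def gser (m : ℕ) : PowerSeries ℚ :=
  PowerSeries.mk fun j => if m ≤ j then 1 / j.factorial else 0

lemma coeff_gser (m j : ℕ) :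
    PowerSeries.coeff j (gser m) = if m ≤ j then (1 : ℚ) / (j.factorial : ℚ) else 0 := by
  rw [gser, PowerSeries.coeff_mk]

lemma coeff_gser_pow (m : ℕ) : ∀ (k n : ℕ),
    (n.factorial : ℚ) * PowerSeries.coeff n (gser m ^ k) = cnt m k (Fin n) := by
  intro k
  induction k with
  | zero =>
    intro n
    rw [pow_zero, PowerSeries.coeff_one, cnt_zero]
    simp only [Fintype.card_fin]
    split_ifs with h <;> simp [h]
  | succ k ih =>
    intro n
    rw [pow_succ', PowerSeries.coeff_mul, Finset.Nat.sum_antidiagonal_eq_sum_range_succ_mk,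
      cnt_succ, Fintype.card_fin]
    push_cast [Finset.mul_sum]
    refine Finset.sum_congr rfl fun j hj => ?_
    have hjn : j ≤ n := Nat.lt_succ_iff.mp (Finset.mem_range.mp hj)
    have hfac : (n.factorial : ℚ) = (n.choose j) * j.factorial * (n - j).factorial := by
      rw_mod_cast [← Nat.choose_mul_factorial_mul_factorial hjn]
    rw [coeff_gser]
    split_ifs with h
    · push_cast
      rw [← ih (n - j)]
      have hj0 : (j.factorial : ℚ) ≠ 0 := by exact_mod_cast j.factorial_ne_zero
      field_simp [hfac]
      rw [hfac]; ring
    · simp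


section partB

variable {n m k : ℕ}

instance finpartition_finite : Finite (Finpartition (univ : Finset (Fin n))) :=
  Finite.of_injective Finpartition.parts (fun P Q h => Finpartition.ext h)

private abbrev SubP (m n k : ℕ) :=
  {P : Finpartition (Finset.univ : Finset (Fin n)) //
    P.parts.card = k ∧ ∀ b ∈ P.parts, m ≤ b.card}

private abbrev GoodT' (m n k : ℕ) := {φ : Fin n → Fin k // ∀ i, m ≤ Nat.card {x // φ x = i}}

/-- every part of a finpartition of univ is `part x` for some x -/
lemma parts_eq_image_part (P : Finpartition (univ : Finset (Fin n))) :
    P.parts = univ.image P.part := by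
  ext b
  constructor
  · intro hb
    obtain ⟨x, hx⟩ := P.nonempty_of_mem_parts hb
    exact mem_image.2 ⟨x, mem_univ x, P.part_eq_of_mem hb hx⟩
  · intro hb
    obtain ⟨x, -, rfl⟩ := mem_image.mp hb
    exact P.part_mem.2 (mem_univ x)

lemma mem_iff_part_eq (P : Finpartition (univ : Finset (Fin n))) {b : Finset (Fin n)}
    (hb : b ∈ P.parts) (x : Fin n) : x ∈ b ↔ P.part x = b :=
  ⟨fun h => P.part_eq_of_mem hb h, fun h => h ▸ P.mem_part (mem_univ x)⟩

/-- `F`: from a partition with an ordering of its parts, build a function -/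
private def FP (p : Σ P : SubP m n k, (Fin k ≃ {b // b ∈ P.1.parts})) : GoodT' m n k := by
  refine ⟨fun x => p.2.symm ⟨p.1.1.part x, p.1.1.part_mem.2 (mem_univ x)⟩, ?_⟩
  intro i
  have key : ∀ x : Fin n, (p.2.symm ⟨p.1.1.part x, p.1.1.part_mem.2 (mem_univ x)⟩ = i)
      ↔ x ∈ (p.2 i).1 := by
    intro x
    rw [Equiv.symm_apply_eq, mem_iff_part_eq p.1.1 (p.2 i).2 x]
    exact ⟨fun h => congrArg Subtype.val h, fun h => Subtype.ext h⟩
  have e : {x // p.2.symm ⟨p.1.1.part x, p.1.1.part_mem.2 (mem_univ x)⟩ = i}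
      ≃ {x // x ∈ (p.2 i).1} := Equiv.subtypeEquivRight key
  rw [Nat.card_congr e, Nat.card_eq_fintype_card, Fintype.card_coe]
  exact p.1.2.2 (p.2 i).1 (p.2 i).2

/-- the fibers of `FP p` are exactly the chosen parts -/
private lemma FP_fiber (p : Σ P : SubP m n k, (Fin k ≃ {b // b ∈ P.1.parts})) (i : Fin k) :
    univ.filter (fun x => (FP p).1 x = i) = (p.2 i).1 := by
  ext x
  simp only [mem_filter, mem_univ, true_and]
  change p.2.symm ⟨p.1.1.part x, p.1.1.part_mem.2 (mem_univ x)⟩ = i ↔ _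
  rw [Equiv.symm_apply_eq, mem_iff_part_eq p.1.1 (p.2 i).2 x]
  exact ⟨fun h => congrArg Subtype.val h, fun h => Subtype.ext h⟩

private lemma FP_injective :
    Function.Injective (FP : (Σ P : SubP m n k, (Fin k ≃ {b // b ∈ P.1.parts})) → GoodT' m n k) := by
  rintro ⟨⟨P, hP⟩, e⟩ ⟨⟨Q, hQ⟩, f⟩ h
  have hfib : ∀ i, (e i).1 = (f i).1 := by
    intro i
    rw [← FP_fiber ⟨⟨P, hP⟩, e⟩ i, ← FP_fiber ⟨⟨Q, hQ⟩, f⟩ i, h]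
  have hparts : P.parts = Q.parts := by
    ext b
    constructor
    · intro hb
      have : (e (e.symm ⟨b, hb⟩)).1 = b := by rw [Equiv.apply_symm_apply]
      rw [hfib] at this
      rw [← this]; exact (f _).2
    · intro hb
      have : (f (f.symm ⟨b, hb⟩)).1 = b := by rw [Equiv.apply_symm_apply]
      rw [← hfib] at this
      rw [← this]; exact (e _).2
  have hPQ : P = Q := Finpartition.ext hparts
  subst hPQ
  refine Sigma.ext rfl ?_
  refine heq_of_eq (Equiv.ext fun i => ?_)
  exact Subtype.ext (hfib i)

end partB

section partB2

variable {n m k : ℕ}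

private def kerSetoid (φ : Fin n → Fin k) : Setoid (Fin n) := Setoid.ker φ

private instance kerDec (φ : Fin n → Fin k) : DecidableRel ⇑(kerSetoid φ) :=
  fun a b => decidable_of_iff (φ a = φ b) Iff.rfl

private noncomputable def fiberPartition (φ : Fin n → Fin k) :
    Finpartition (univ : Finset (Fin n)) :=
  Finpartition.ofSetoid (kerSetoid φ)

private lemma part_fiberPartition (φ : Fin n → Fin k) (a : Fin n) :
    (fiberPartition φ).part a = univ.filter fun b => φ b = φ a := by
  ext b
  unfold fiberPartition
  rw [Finpartition.mem_part_ofSetoid_iff_rel]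
  simp only [mem_filter, mem_univ, true_and]
  exact ⟨fun h => h.symm, fun h => h.symm⟩

private lemma good_surj (q : GoodT' m n k) (hm : 1 ≤ m) : Function.Surjective q.1 := by
  intro i
  have h1 : 0 < Nat.card {x // q.1 x = i} := lt_of_lt_of_le hm (q.2 i)
  rcases isEmpty_or_nonempty {x // q.1 x = i} with he | hne
  · rw [Nat.card_of_isEmpty] at h1; exact absurd h1 (lt_irrefl 0)
  · obtain ⟨x, hx⟩ := hne; exact ⟨x, hx⟩

private lemma parts_fiberPartition (q : GoodT' m n k) (hm : 1 ≤ m) :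
    (fiberPartition q.1).parts = univ.image (fun i => univ.filter fun b => q.1 b = i) := by
  rw [parts_eq_image_part]
  ext b
  simp only [mem_image, mem_univ, true_and]
  constructor
  · rintro ⟨a, rfl⟩
    exact ⟨q.1 a, (part_fiberPartition q.1 a).symm⟩
  · rintro ⟨i, rfl⟩
    obtain ⟨a, rfl⟩ := good_surj q hm i
    exact ⟨a, part_fiberPartition q.1 a⟩

private lemma fiber_nonempty (q : GoodT' m n k) (hm : 1 ≤ m) (i : Fin k) :
    (univ.filter fun b => q.1 b = i).Nonempty := by
  obtain ⟨a, rfl⟩ := good_surj q hm i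
  exact ⟨a, mem_filter.mpr ⟨mem_univ a, rfl⟩⟩

private lemma fiber_injective (q : GoodT' m n k) (hm : 1 ≤ m) :
    Function.Injective (fun i => univ.filter fun b => q.1 b = i) := by
  intro i j hij
  have hij' : (univ.filter fun b => q.1 b = i) = univ.filter fun b => q.1 b = j := hij
  obtain ⟨a, ha⟩ := fiber_nonempty q hm i
  have ha' : a ∈ univ.filter fun b => q.1 b = j := hij' ▸ ha
  have h1 : q.1 a = i := (mem_filter.mp ha).2
  have h2 : q.1 a = j := (mem_filter.mp ha').2
  rw [← h1, h2]

private noncomputable def GP (hm : 1 ≤ m) (q : GoodT' m n k) :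
    Σ P : SubP m n k, (Fin k ≃ {b // b ∈ P.1.parts}) := by
  refine ⟨⟨fiberPartition q.1, ?_, ?_⟩, ?_⟩
  · rw [parts_fiberPartition q hm, card_image_of_injective _ (fiber_injective q hm),
      card_univ, Fintype.card_fin]
  · intro b hb
    rw [parts_fiberPartition q hm] at hb
    obtain ⟨i, -, rfl⟩ := mem_image.mp hb
    have := q.2 i
    rwa [ncard_fiber] at this
  · refine Equiv.ofBijective (fun i => ⟨univ.filter fun b => q.1 b = i, ?_⟩) ⟨?_, ?_⟩
    · rw [parts_fiberPartition q hm]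
      exact mem_image.mpr ⟨i, mem_univ i, rfl⟩
    · intro i j hij
      exact fiber_injective q hm (congrArg Subtype.val hij)
    · rintro ⟨b, hb⟩
      rw [parts_fiberPartition q hm] at hb
      obtain ⟨i, -, rfl⟩ := mem_image.mp hb
      exact ⟨i, rfl⟩

private lemma FP_GP (hm : 1 ≤ m) (q : GoodT' m n k) : FP (GP hm q) = q := by
  refine Subtype.ext (funext fun x => ?_)
  show (GP hm q).2.symm ⟨(fiberPartition q.1).part x, _⟩ = q.1 x
  rw [Equiv.symm_apply_eq]
  refine Subtype.ext ?_
  show (fiberPartition q.1).part x = univ.filter fun b => q.1 b = q.1 x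
  exact part_fiberPartition q.1 x

private lemma GP_injective (hm : 1 ≤ m) :
    Function.Injective (GP hm : GoodT' m n k → Σ P : SubP m n k, (Fin k ≃ {b // b ∈ P.1.parts})) := by
  intro a b hab
  rw [← FP_GP hm a, ← FP_GP hm b, hab]

lemma cnt_eq_assocStirling (hm : 1 ≤ m) (n k : ℕ) :
    cnt m k (Fin n) = assocStirling m n k * k.factorial := by
  have h1 : cnt m k (Fin n) = Nat.card (Σ P : SubP m n k, (Fin k ≃ {b // b ∈ P.1.parts})) :=
    le_antisymm (Nat.card_le_card_of_injective _ (GP_injective hm))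
      (Nat.card_le_card_of_injective _ FP_injective)
  rw [h1]
  have e2 : (Σ P : SubP m n k, (Fin k ≃ {b // b ∈ P.1.parts}))
      ≃ (SubP m n k × (Fin k ≃ Fin k)) :=
    (Equiv.sigmaCongrRight (fun P => Equiv.equivCongr (Equiv.refl (Fin k))
      (Fintype.equivFinOfCardEq (by rw [Fintype.card_coe]; exact P.2.1)))).trans
      (Equiv.sigmaEquivProd _ _)
  rw [Nat.card_congr e2, Nat.card_prod,
    Nat.card_eq_fintype_card (α := Fin k ≃ Fin k), Fintype.card_equiv (Equiv.refl _),
    Fintype.card_fin]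
  rfl

lemma assocStirling_eq_zero (m : ℕ) {n k : ℕ} (h : n < k) : assocStirling m n k = 0 := by
  have : IsEmpty {P : Finpartition (Finset.univ : Finset (Fin n)) //
      P.parts.card = k ∧ ∀ b ∈ P.parts, m ≤ b.card} := by
    refine ⟨fun Q => ?_⟩
    obtain ⟨P, hP, -⟩ := Q
    have := P.card_parts_le_card
    rw [hP, card_univ, Fintype.card_fin] at this
    omega
  unfold assocStirling
  exact Nat.card_of_isEmpty

end partB2

lemma coeff_gser_pow' {m : ℕ} (hm : 1 ≤ m) (k a : ℕ) :
    PowerSeries.coeff a (gser m ^ k) =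
      (assocStirling m a k * k.factorial : ℚ) / a.factorial := by
  have h := coeff_gser_pow m k a
  rw [cnt_eq_assocStirling hm] at h
  have ha : (a.factorial : ℚ) ≠ 0 := by exact_mod_cast a.factorial_ne_zero
  field_simp at h ⊢
  exact_mod_cast h

lemma coeff_gser_pow_eq_zero {m : ℕ} (hm : 1 ≤ m) {k a : ℕ} (h : a < k) :
    PowerSeries.coeff a (gser m ^ k) = 0 := by
  rw [coeff_gser_pow' hm, assocStirling_eq_zero m h]
  simp

/-- the series appearing in the theorem -/
lemma fser_eq {m : ℕ} (hm : 1 ≤ m) :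
    PowerSeries.rescale (-1 : ℚ) (Em (m - 1)) -
      PowerSeries.rescale (-1 : ℚ) (PowerSeries.exp ℚ) =
    -(PowerSeries.rescale (-1 : ℚ) (gser m)) := by
  ext j
  simp only [map_sub, map_neg, coeff_rescale, Em, gser, coeff_mk, PowerSeries.coeff_exp]
  have halg : algebraMap ℚ ℚ (1 / (j.factorial : ℚ)) = 1 / (j.factorial : ℚ) := by
    simp [Algebra.algebraMap_self]
  rw [halg]
  by_cases hj : m ≤ j
  · have : ¬ (j ≤ m - 1) := by omega
    simp [hj, this]
  · have : j ≤ m - 1 := by omega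
    simp [hj, this]

lemma coeff_fser_pow {m : ℕ} (hm : 1 ≤ m) (k a : ℕ) :
    PowerSeries.coeff a ((PowerSeries.rescale (-1 : ℚ) (Em (m - 1)) -
        PowerSeries.rescale (-1 : ℚ) (PowerSeries.exp ℚ)) ^ k) =
      (-1 : ℚ) ^ (a + k) * ((assocStirling m a k * k.factorial : ℚ) / a.factorial) := by
  rw [fser_eq hm, neg_pow]
  have h1 : (-1 : ℚ⟦X⟧) = PowerSeries.C (-1 : ℚ) := by simp
  rw [h1, ← map_pow, ← map_pow, PowerSeries.coeff_C_mul, PowerSeries.coeff_rescale,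
    coeff_gser_pow' hm, pow_add]
  ring

end AuxAll

theorem assocPolyBernoulli_egf (μ m : ℕ) (hμ : 1 ≤ μ) (hm : 1 ≤ m) :
    PowerSeries.mk (fun n => assocPolyBernoulli μ m n / n.factorial) *
        (PowerSeries.rescale (-1 : ℚ) (Em (m - 1)) -
          PowerSeries.rescale (-1 : ℚ) (PowerSeries.exp ℚ)) =
      Li μ (PowerSeries.rescale (-1 : ℚ) (Em (m - 1)) -
        PowerSeries.rescale (-1 : ℚ) (PowerSeries.exp ℚ)) := by
  classical
  set f : PowerSeries ℚ := PowerSeries.rescale (-1 : ℚ) (Em (m - 1)) -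
      PowerSeries.rescale (-1 : ℚ) (PowerSeries.exp ℚ) with hfdef
  ext n
  have hB : ∀ a ≤ n, assocPolyBernoulli μ m a / a.factorial
      = ∑ k ∈ Finset.range (n+1), PowerSeries.coeff a (f ^ k) / ((k : ℚ) + 1) ^ μ := by
    intro a ha
    rw [assocPolyBernoulli, Finset.sum_div]
    rw [← Finset.sum_subset (Finset.range_subset_range.2 (by omega) : Finset.range (a+1) ⊆ Finset.range (n+1))]
    · refine Finset.sum_congr rfl fun k hk => ?_
      have hk' : k ≤ a := by
        have := Finset.mem_range.mp hk; omega
      rw [hfdef, coeff_fser_pow hm]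
      have hsign : (-1 : ℚ) ^ (a + k) = (-1 : ℚ) ^ (a - k) := by
        rw [show a + k = (a - k) + 2 * k from by omega, pow_add, pow_mul]
        simp
      rw [hsign]
      ring
    · intro k hk1 hk2
      have hak : a < k := by
        have h1 := Finset.mem_range.mp hk1
        have h2 : ¬ (k < a + 1) := fun h => hk2 (Finset.mem_range.mpr h)
        omega
      rw [hfdef, coeff_fser_pow hm, assocStirling_eq_zero m hak]
      simp
  rw [PowerSeries.coeff_mul, Finset.Nat.sum_antidiagonal_eq_sum_range_succ_mk]
  simp only [Li, PowerSeries.coeff_mk]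
  calc
    ∑ a ∈ Finset.range (n+1), (assocPolyBernoulli μ m a / a.factorial) * PowerSeries.coeff (n - a) f
      = ∑ a ∈ Finset.range (n+1), ∑ k ∈ Finset.range (n+1),
          (PowerSeries.coeff a (f ^ k) / ((k : ℚ) + 1) ^ μ) * PowerSeries.coeff (n - a) f := by
        refine Finset.sum_congr rfl fun a ha => ?_
        rw [hB a (by have := Finset.mem_range.mp ha; omega), Finset.sum_mul]
    _ = ∑ k ∈ Finset.range (n+1), PowerSeries.coeff n (f ^ (k+1)) / ((k : ℚ) + 1) ^ μ := by
        rw [Finset.sum_comm]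
        refine Finset.sum_congr rfl fun k hk => ?_
        rw [pow_succ, PowerSeries.coeff_mul, Finset.Nat.sum_antidiagonal_eq_sum_range_succ_mk,
          Finset.sum_div]
        refine Finset.sum_congr rfl fun a ha => ?_
        ring
    _ = ∑ j ∈ Finset.Icc 1 (n+1), PowerSeries.coeff n (f ^ j) / (j : ℚ) ^ μ := by
        rw [← Finset.Ico_add_one_right_eq_Icc, Finset.sum_Ico_eq_sum_range]
        refine Finset.sum_congr rfl fun k hk => ?_
        rw [add_comm 1 k]
        push_cast
        ring
    _ = ∑ j ∈ Finset.Icc 1 n, PowerSeries.coeff n (f ^ j) / (j : ℚ) ^ μ := by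
        rw [Finset.sum_Icc_succ_top (by omega : 1 ≤ n + 1)]
        rw [hfdef, coeff_fser_pow hm, assocStirling_eq_zero m (by omega : n < n + 1)]
        simp
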